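/- Let X be a random variable with E X = 0, E X² = 1, E|X|³ = b where b ≥ 1. Then |E X³| ≤ A(b)·E|X|³, where A(b) = sqrt( (1/2)·sqrt(1 + 8/b²) + 1/2 − 2/b² ). -/

import Mathlib

open MeasureTheory


theorem core' (u β : ℝ) (hu : 1 ≤ u) (h0 : 0 ≤ β) (h1 : β ≤ 1)
    (hc : u*(u+1)^2*(1-2*β+2*β^2)^2 ≤ (u^2+1)^2*(β*(1-β))) :
    1-β ≤ β^3 * (u*(u+1)^2) := by
  rcases le_or_gt (1/2 : ℝ) β with hβ | hβ
  · have h8 : (1:ℝ)/8 ≤ β^3 := by nlinarith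
    have hk : (4:ℝ) ≤ u*(u+1)^2 := by nlinarith [sq_nonneg (u-1)]
    nlinarith [mul_le_mul h8 hk (by norm_num) (by positivity)]
  · have ht0 : 0 ≤ β*(1-β) := mul_nonneg h0 (by linarith)
    have ht4 : β*(1-β) ≤ 1/4 := by nlinarith [sq_nonneg (2*β-1)]
    have key : (u - (u+1)^2*(β*(1-β)))*((u+1)^2-4*u*(β*(1-β))) ≤ 0 := by nlinarith [hc]
    have pos : 0 < (u+1)^2-4*u*(β*(1-β)) := by nlinarith
    have hA : u ≤ (u+1)^2 * (β*(1-β)) := by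
      by_contra hA'
      push_neg at hA'
      nlinarith [mul_pos (sub_pos.2 hA') pos]
    have hB : 1 ≤ β*(u+1) := by
      by_contra hy
      push_neg at hy
      have h2 : 0 < u - β*(u+1) := by nlinarith
      nlinarith [mul_pos (sub_pos.2 hy) h2]
    have h3 : (1:ℝ) ≤ (β*(u+1))^3 := one_le_pow₀ hB
    nlinarith [h3, mul_pos (lt_of_lt_of_le zero_lt_one hu) (show (0:ℝ) < u+1 by linarith)]

set_option maxHeartbeats 1000000 in
theorem side (b r u c p q a2 b2 a3 b3 : ℝ)
    (hu : 1 ≤ u)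
    (hb2u : b^2*(u*(u+1)^2) = (u^2+1)^2)
    (hbru : (b-r)^2*(u*(u+1)^2) = 4)
    (hbr : 0 ≤ b - r)
    (hc0 : 0 ≤ c) (hp : 0 ≤ p) (hq : 0 ≤ q) (hpq : p + q ≤ 1)
    (ha2 : 0 ≤ a2) (hb2 : 0 ≤ b2) (ha3 : 0 ≤ a3) (hb3 : 0 ≤ b3)
    (hs2 : a2 + b2 = 1) (hs3 : a3 + b3 = b)
    (hc1 : a2^2 ≤ c*a3) (hc2 : b2^2 ≤ c*b3)
    (hc3 : c^2 ≤ p*a2) (hc4 : c^2 ≤ q*b2) :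
    a3 - b3 ≤ r := by
  have hku : (0:ℝ) < u*(u+1)^2 := by positivity
  -- c > 0
  have hcpos : 0 < c := by
    rcases hc0.lt_or_eq with h | h
    · exact h
    · exfalso; subst h
      have e1 : (a2+b2)^2 = 1 := by rw [hs2]; norm_num
      nlinarith [e1, sq_nonneg (a2-b2), hc1, hc2]
  -- c^2 ≤ a2 * b2
  have hcab : c^2 ≤ a2*b2 := by
    nlinarith [mul_le_mul_of_nonneg_left hc3 hb2, mul_le_mul_of_nonneg_left hc4 ha2,
      mul_nonneg ha2 hb2, sq_nonneg c]
  have ha2e : a2 = 1 - b2 := by linarith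
  subst ha2e
  have hb21 : b2 ≤ 1 := by linarith
  -- (1-2b2+2b2^2) ≤ c*b
  have hcb : 1 - 2*b2 + 2*b2^2 ≤ c*b := by nlinarith [hc1, hc2]
  have hbpos : 0 ≤ b := by linarith
  have hq0 : 0 ≤ 1 - 2*b2 + 2*b2^2 := by nlinarith [sq_nonneg (2*b2-1)]
  -- hypothesis of core
  have hcore_hyp : u*(u+1)^2*(1-2*b2+2*b2^2)^2 ≤ (u^2+1)^2*(b2*(1-b2)) := by
    have h1 := mul_self_le_mul_self hq0 hcb
    have h2 : c^2*(b*b) ≤ ((1-b2)*b2)*(b*b) := mul_le_mul_of_nonneg_right hcab (mul_self_nonneg b)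
    have h3 : (1-2*b2+2*b2^2)*(1-2*b2+2*b2^2) ≤ ((1-b2)*b2)*(b*b) := by linarith
    have h4 := mul_le_mul_of_nonneg_left h3 hku.le
    have h5 : u*(u+1)^2*(((1-b2)*b2)*(b*b)) = ((1-b2)*b2)*((u^2+1)^2) := by
      rw [← hb2u]; ring
    linarith [h4, h5]
  have hcore := core' u b2 hu hb2 hb21 hcore_hyp
  -- c*(b-r) ≤ 2*b2^2
  have h6 : b2*(1-b2)*(b-r)^2 * (u*(u+1)^2) ≤ 4*b2^4 * (u*(u+1)^2) := by
    have e1 : b2*(1-b2)*(b-r)^2 * (u*(u+1)^2) = (b2*(1-b2))*4 := by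
      linear_combination (b2*(1-b2)) * hbru
    have e2 := mul_le_mul_of_nonneg_left hcore (show (0:ℝ) ≤ 4*b2 by linarith)
    rw [e1]; nlinarith [e2]
  have h7 : b2*(1-b2)*(b-r)^2 ≤ 4*b2^4 := le_of_mul_le_mul_right h6 hku
  have hfin : c*(b-r) ≤ 2*b2^2 := by
    have hA := mul_le_mul_of_nonneg_right hcab (sq_nonneg (b-r))
    have h5 : (c*(b-r))^2 ≤ (2*b2^2)^2 := by nlinarith [hA, h7]
    nlinarith [h5, mul_nonneg hc0 hbr, sq_nonneg b2, hb2]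
  -- conclude
  have e : c*b = c*a3 + c*b3 := by rw [← hs3]; ring
  have : c*(a3-b3) ≤ c*r := by nlinarith [hc2, hfin, e]
  exact le_of_mul_le_mul_left this hcpos


lemma integral_cauchy_schwarz {Ω : Type*} [MeasurableSpace Ω] (ν : Measure Ω) (f g : Ω → ℝ)
    (hf : Integrable (fun ω => f ω ^ 2) ν) (hg : Integrable (fun ω => g ω ^ 2) ν)
    (hfg : Integrable (fun ω => f ω * g ω) ν) :
    (∫ ω, f ω * g ω ∂ν) ^ 2 ≤ (∫ ω, f ω ^ 2 ∂ν) * (∫ ω, g ω ^ 2 ∂ν) := by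
  have key : ∀ x : ℝ, 0 ≤ (∫ ω, f ω ^ 2 ∂ν) * (x * x)
      + (-(2 * ∫ ω, f ω * g ω ∂ν)) * x + (∫ ω, g ω ^ 2 ∂ν) := by
    intro x
    have h0 : 0 ≤ ∫ ω, (x * f ω - g ω) ^ 2 ∂ν := integral_nonneg fun ω => sq_nonneg _
    have e1 : ∫ ω, (x * f ω - g ω) ^ 2 ∂ν
        = ∫ ω, ((x * x) * f ω ^ 2 - (2 * x) * (f ω * g ω) + g ω ^ 2) ∂ν := by
      congr 1; funext ω; ring
    have e2 : ∫ ω, ((x * x) * f ω ^ 2 - (2 * x) * (f ω * g ω) + g ω ^ 2) ∂ν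
        = ∫ ω, ((x * x) * f ω ^ 2 - (2 * x) * (f ω * g ω)) ∂ν + ∫ ω, g ω ^ 2 ∂ν :=
      integral_add ((hf.const_mul _).sub (hfg.const_mul _)) hg
    have e3 : ∫ ω, ((x * x) * f ω ^ 2 - (2 * x) * (f ω * g ω)) ∂ν
        = ∫ ω, (x * x) * f ω ^ 2 ∂ν - ∫ ω, (2 * x) * (f ω * g ω) ∂ν :=
      integral_sub (hf.const_mul _) (hfg.const_mul _)
    rw [e1, e2, e3, integral_const_mul, integral_const_mul] at h0
    nlinarith [h0]
  have hd := discrim_le_zero key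
  rw [discrim] at hd
  nlinarith [hd]


set_option maxHeartbeats 1000000 in
lemma setup (b : ℝ) (hb : 1 ≤ b) :
    ∃ u : ℝ, 1 ≤ u ∧
      0 ≤ Real.sqrt ((1 / 2) * Real.sqrt (1 + 8 / b ^ 2) + 1 / 2 - 2 / b ^ 2) * b ∧
      b^2*(u*(u+1)^2) = (u^2+1)^2 ∧
      (b - Real.sqrt ((1 / 2) * Real.sqrt (1 + 8 / b ^ 2) + 1 / 2 - 2 / b ^ 2) * b)^2*(u*(u+1)^2) = 4 ∧
      0 ≤ b - Real.sqrt ((1 / 2) * Real.sqrt (1 + 8 / b ^ 2) + 1 / 2 - 2 / b ^ 2) * b := by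
  have hb0 : (0:ℝ) < b := by linarith
  obtain ⟨w, hwdef⟩ : ∃ w, Real.sqrt (1 + 8 / b ^ 2) = w := ⟨_, rfl⟩
  rw [hwdef]
  have hw0 : 0 ≤ w := hwdef ▸ Real.sqrt_nonneg _
  have hw2 : w ^ 2 = 1 + 8 / b ^ 2 := by rw [← hwdef]; exact Real.sq_sqrt (by positivity)
  have hw2' : w ^ 2 * b ^ 2 = b ^ 2 + 8 := by rw [hw2]; field_simp
  have hw21 : 1 ≤ w ^ 2 := by
    rw [hw2]
    have : (0:ℝ) ≤ 8 / b ^ 2 := by positivity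
    linarith
  have hw1 : 1 ≤ w := by nlinarith [hw21, hw0]
  have hP : 0 ≤ w * b ^ 2 + b ^ 2 - 4 := by
    have hw4 : w ^ 2 * b ^ 4 = b ^ 4 + 8 * b ^ 2 := by nlinarith [hw2']
    have hpos2 : 0 < w * b ^ 2 - b ^ 2 + 4 := by nlinarith [mul_nonneg (sub_nonneg.2 hw1) (sq_nonneg b)]
    nlinarith [hw4, hpos2, mul_pos hb0 hb0]
  obtain ⟨Sv, hSdef⟩ : ∃ S, (1 / 2) * w + 1 / 2 - 2 / b ^ 2 = S := ⟨_, rfl⟩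
  rw [hSdef]
  have hSb : Sv * (2 * b ^ 2) = w * b ^ 2 + b ^ 2 - 4 := by
    rw [← hSdef]; field_simp; ring
  have hS : 0 ≤ Sv := by nlinarith [hSb, hP, mul_pos hb0 hb0]
  obtain ⟨r, hrdef⟩ : ∃ r, Real.sqrt Sv * b = r := ⟨_, rfl⟩
  rw [hrdef]
  have hr0 : 0 ≤ r := hrdef ▸ mul_nonneg (Real.sqrt_nonneg _) hb0.le
  have hr2 : r ^ 2 = Sv * b ^ 2 := by rw [← hrdef, mul_pow, Real.sq_sqrt hS]
  have hid : (r ^ 2 + 2) ^ 2 = b ^ 2 * (r ^ 2 + 4) := by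
    have hSb2 : Sv * b ^ 2 = (w * b ^ 2 + b ^ 2 - 4) / 2 := by linear_combination hSb / 2
    rw [hr2, hSb2]
    linear_combination (b ^ 2 / 4) * hw2'
  obtain ⟨s, hsdef⟩ : ∃ s, Real.sqrt (r ^ 2 + 4) = s := ⟨_, rfl⟩
  have hs4 : s ^ 2 = r ^ 2 + 4 := by rw [← hsdef]; exact Real.sq_sqrt (by positivity)
  have hs0 : 0 ≤ s := hsdef ▸ Real.sqrt_nonneg _
  have hs2 : 2 ≤ s := by nlinarith [hs4, hs0, sq_nonneg r]
  obtain ⟨m, hmdef⟩ : ∃ m, (r + s) / 2 = m := ⟨_, rfl⟩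
  have hm1 : 1 ≤ m := by rw [← hmdef]; linarith
  have hm0 : 0 < m := by linarith
  have hsm : s = 2*m - r := by linarith [hmdef]
  have hs4' : (2*m - r) ^ 2 = r ^ 2 + 4 := by rw [← hsm]; exact hs4
  have hmq : m ^ 2 = r * m + 1 := by linear_combination hs4' / 4
  have hrm : r * m = m ^ 2 - 1 := by linear_combination -hmq
  have hr2m : r ^ 2 * m ^ 2 = (m ^ 2 - 1) ^ 2 := by
    linear_combination (r * m + m ^ 2 - 1) * hrm
  have hr4 : r ^ 4 * m ^ 4 = (m ^ 2 - 1) ^ 4 := by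
    linear_combination (r ^ 2 * m ^ 2 + (m ^ 2 - 1) ^ 2) * hr2m
  have hbm : b * (m ^ 3 + m) = m ^ 4 + 1 := by
    have h1 : (b * (m ^ 3 + m)) ^ 2 = (m ^ 4 + 1) ^ 2 := by
      linear_combination (-(m ^ 4)) * hid + hr4 + (-(b ^ 2 - 4) * m ^ 2) * hr2m
    have hx : 0 ≤ b * (m ^ 3 + m) := by positivity
    have hy : 0 ≤ m ^ 4 + 1 := by positivity
    have := congrArg Real.sqrt h1
    rwa [Real.sqrt_sq hx, Real.sqrt_sq hy] at this
  have hbrm : (b - r) * (m ^ 3 + m) = 2 := by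
    linear_combination hbm - (m ^ 2 + 1) * hrm
  have hmm3 : 0 < m ^ 3 + m := by positivity
  have hbr : 0 ≤ b - r := by nlinarith [hbrm, hmm3]
  refine ⟨m ^ 2, by nlinarith [hm1], hr0, ?_, ?_, hbr⟩
  · linear_combination (b * (m ^ 3 + m) + (m ^ 4 + 1)) * hbm
  · linear_combination ((b - r) * (m ^ 3 + m) + 2) * hbrm

set_option maxHeartbeats 1000000 in
theorem third_moment_inequality
    {Ω : Type*} [MeasurableSpace Ω] (μ : Measure Ω) [IsProbabilityMeasure μ]
    (X : Ω → ℝ) (hX : Measurable X) (b : ℝ) (hb : 1 ≤ b)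
    (h1 : Integrable X μ) (h2 : Integrable (fun ω => X ω ^ 2) μ)
    (h3 : Integrable (fun ω => |X ω| ^ 3) μ)
    (hm1 : ∫ ω, X ω ∂μ = 0) (hm2 : ∫ ω, X ω ^ 2 ∂μ = 1)
    (hm3 : ∫ ω, |X ω| ^ 3 ∂μ = b) :
    |∫ ω, X ω ^ 3 ∂μ| ≤
      Real.sqrt ((1 / 2) * Real.sqrt (1 + 8 / b ^ 2) + 1 / 2 - 2 / b ^ 2) * b := by
  obtain ⟨u, hu, hr0, hb2u, hbru, hbr⟩ := setup b hb
  set S : Set Ω := {ω | 0 < X ω} with hSset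
  set T : Set Ω := {ω | X ω < 0} with hTset
  have hSm : MeasurableSet S := measurableSet_lt measurable_const hX
  have hTm : MeasurableSet T := measurableSet_lt hX measurable_const
  have hdisj : Disjoint S T := by
    rw [Set.disjoint_left]
    intro ω h1' h2'
    have hp : (0:ℝ) < X ω := h1'
    have hn : X ω < 0 := h2'
    linarith
  have split : ∀ F : Ω → ℝ, Integrable F μ → (∀ ω, X ω = 0 → F ω = 0) →
      (∫ ω in S, F ω ∂μ) + (∫ ω in T, F ω ∂μ) = ∫ ω, F ω ∂μ := by
    intro F hFi hF0
    have hcompl : ∫ ω in (S ∪ T)ᶜ, F ω ∂μ = 0 := by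
      have hae : ∀ᵐ ω ∂(μ.restrict (S ∪ T)ᶜ), F ω = (fun _ => (0:ℝ)) ω := by
        refine (ae_restrict_mem (hSm.union hTm).compl).mono ?_
        intro ω hω
        simp only [Set.mem_compl_iff, Set.mem_union, hSset, hTset, Set.mem_setOf_eq] at hω
        push_neg at hω
        exact hF0 ω (le_antisymm hω.1 hω.2)
      calc ∫ ω in (S ∪ T)ᶜ, F ω ∂μ = ∫ _ω in (S ∪ T)ᶜ, (0:ℝ) ∂μ := integral_congr_ae hae
        _ = 0 := integral_zero _ _
    have hu2 := setIntegral_union hdisj hTm hFi.integrableOn hFi.integrableOn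
    have hc2 := integral_add_compl (hSm.union hTm) hFi
    rw [hu2, hcompl] at hc2
    linarith [hc2]
  set c := ∫ ω in S, X ω ∂μ with hcdef
  set a2 := ∫ ω in S, X ω ^ 2 ∂μ with ha2def
  set b2 := ∫ ω in T, X ω ^ 2 ∂μ with hb2def
  set a3 := ∫ ω in S, |X ω| ^ 3 ∂μ with ha3def
  set b3 := ∫ ω in T, |X ω| ^ 3 ∂μ with hb3def
  set p := (μ S).toReal with hpdef
  set q := (μ T).toReal with hqdef
  have hsum2 : a2 + b2 = 1 := by
    have := split _ h2 (fun ω h => by rw [h]; ring)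
    rw [hm2] at this; exact this
  have hsum3 : a3 + b3 = b := by
    have := split _ h3 (fun ω h => by rw [h]; simp)
    rw [hm3] at this; exact this
  have hmean : ∫ ω in T, X ω ∂μ = -c := by
    have := split _ h1 (fun ω h => h)
    rw [hm1] at this; linarith
  have hX3i : Integrable (fun ω => X ω ^ 3) μ := by
    refine h3.mono' ((hX.pow_const 3).aestronglyMeasurable) (ae_of_all _ fun ω => ?_)
    rw [Real.norm_eq_abs, abs_pow]
  have hS3 : ∫ ω in S, X ω ^ 3 ∂μ = a3 :=
    setIntegral_congr_fun hSm (fun ω hω => by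
      have h : (0:ℝ) < X ω := hω
      simp [abs_of_pos h])
  have hT3 : ∫ ω in T, X ω ^ 3 ∂μ = -b3 := by
    have e : ∫ ω in T, X ω ^ 3 ∂μ = ∫ ω in T, -(|X ω| ^ 3) ∂μ :=
      setIntegral_congr_fun hTm (fun ω hω => by
        have h : X ω < 0 := hω
        rw [abs_of_neg h]; ring)
    rw [e, integral_neg]
  have hEX3 : ∫ ω, X ω ^ 3 ∂μ = a3 - b3 := by
    have := split _ hX3i (fun ω h => by rw [h]; ring)
    rw [hS3, hT3] at this
    linarith
  -- Cauchy-Schwarz on S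
  have haeS : ∀ᵐ ω ∂(μ.restrict S), 0 < X ω := (ae_restrict_mem hSm).mono fun ω h => h
  have ef : (fun ω => X ω) =ᵐ[μ.restrict S] (fun ω => (Real.sqrt (X ω)) ^ 2) :=
    haeS.mono fun ω h => (Real.sq_sqrt h.le).symm
  have eg : (fun ω => |X ω| ^ 3) =ᵐ[μ.restrict S] (fun ω => (X ω * Real.sqrt (X ω)) ^ 2) :=
    haeS.mono fun ω h => by
      have hss : Real.sqrt (X ω) * Real.sqrt (X ω) = X ω := Real.mul_self_sqrt h.le
      show |X ω| ^ 3 = (X ω * Real.sqrt (X ω)) ^ 2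
      rw [abs_of_pos h]
      linear_combination (-(X ω ^ 2)) * hss
  have efg : (fun ω => X ω ^ 2) =ᵐ[μ.restrict S]
      (fun ω => Real.sqrt (X ω) * (X ω * Real.sqrt (X ω))) :=
    haeS.mono fun ω h => by
      have hss : Real.sqrt (X ω) * Real.sqrt (X ω) = X ω := Real.mul_self_sqrt h.le
      show X ω ^ 2 = Real.sqrt (X ω) * (X ω * Real.sqrt (X ω))
      linear_combination (-(X ω)) * hss
  have hCS1 := integral_cauchy_schwarz (μ.restrict S) (fun ω => Real.sqrt (X ω))
    (fun ω => X ω * Real.sqrt (X ω)) (h1.restrict.congr ef) (h3.restrict.congr eg)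
    (h2.restrict.congr efg)
  rw [← integral_congr_ae ef, ← integral_congr_ae eg, ← integral_congr_ae efg] at hCS1
  have hc1 : a2 ^ 2 ≤ c * a3 := hCS1
  -- Cauchy-Schwarz on T
  have haeT : ∀ᵐ ω ∂(μ.restrict T), X ω < 0 := (ae_restrict_mem hTm).mono fun ω h => h
  have ef' : (fun ω => -X ω) =ᵐ[μ.restrict T] (fun ω => (Real.sqrt (-X ω)) ^ 2) :=
    haeT.mono fun ω h => (Real.sq_sqrt (neg_nonneg.2 h.le)).symm
  have eg' : (fun ω => |X ω| ^ 3) =ᵐ[μ.restrict T] (fun ω => (-X ω * Real.sqrt (-X ω)) ^ 2) :=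
    haeT.mono fun ω h => by
      have hss : Real.sqrt (-X ω) * Real.sqrt (-X ω) = -X ω :=
        Real.mul_self_sqrt (neg_nonneg.2 h.le)
      show |X ω| ^ 3 = (-X ω * Real.sqrt (-X ω)) ^ 2
      rw [abs_of_neg h]
      linear_combination (-(X ω ^ 2)) * hss
  have efg' : (fun ω => X ω ^ 2) =ᵐ[μ.restrict T]
      (fun ω => Real.sqrt (-X ω) * (-X ω * Real.sqrt (-X ω))) :=
    haeT.mono fun ω h => by
      have hss : Real.sqrt (-X ω) * Real.sqrt (-X ω) = -X ω :=
        Real.mul_self_sqrt (neg_nonneg.2 h.le)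
      show X ω ^ 2 = Real.sqrt (-X ω) * (-X ω * Real.sqrt (-X ω))
      linear_combination (X ω) * hss
  have hXn : Integrable (fun ω => -X ω) (μ.restrict T) := (h1.restrict (s := T)).neg
  have hCS2 := integral_cauchy_schwarz (μ.restrict T) (fun ω => Real.sqrt (-X ω))
    (fun ω => -X ω * Real.sqrt (-X ω)) (hXn.congr ef') (h3.restrict.congr eg')
    (h2.restrict.congr efg')
  rw [← integral_congr_ae ef', ← integral_congr_ae eg', ← integral_congr_ae efg'] at hCS2
  have hTc : ∫ ω in T, -X ω ∂μ = c := by rw [integral_neg, hmean]; ring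
  rw [hTc] at hCS2
  have hc2' : b2 ^ 2 ≤ c * b3 := hCS2
  -- CS with constant 1 on S
  have honeS : Integrable (fun _ω : Ω => (1:ℝ) ^ 2) (μ.restrict S) := by
    simpa using (integrable_const (1:ℝ) : Integrable _ (μ.restrict S))
  have hfg1S : Integrable (fun ω => (1:ℝ) * X ω) (μ.restrict S) := by
    simpa using h1.restrict (s := S)
  have hCS3 := integral_cauchy_schwarz (μ.restrict S) (fun _ => (1:ℝ)) (fun ω => X ω)
    honeS (h2.restrict) hfg1S
  have e1S : ∫ ω in S, (1:ℝ) * X ω ∂μ = c := by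
    simp only [one_mul]; rfl
  have e2S : ∫ _ω in S, (1:ℝ) ^ 2 ∂μ = p := by
    simp [Measure.restrict_apply_univ]; rfl
  rw [e1S, e2S] at hCS3
  have hc3 : c ^ 2 ≤ p * a2 := hCS3
  -- CS with constant 1 on T
  have honeT : Integrable (fun _ω : Ω => (1:ℝ) ^ 2) (μ.restrict T) := by
    simpa using (integrable_const (1:ℝ) : Integrable _ (μ.restrict T))
  have hfg1T : Integrable (fun ω => (1:ℝ) * -X ω) (μ.restrict T) := by
    simpa using hXn
  have hXn2 : Integrable (fun ω => (-X ω) ^ 2) (μ.restrict T) := by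
    have : (fun ω => (-X ω) ^ 2) = fun ω => X ω ^ 2 := by funext ω; ring
    rw [this]; exact h2.restrict
  have hCS4 := integral_cauchy_schwarz (μ.restrict T) (fun _ => (1:ℝ)) (fun ω => -X ω)
    honeT hXn2 hfg1T
  have e1T : ∫ ω in T, (1:ℝ) * -X ω ∂μ = c := by
    simp only [one_mul]; exact hTc
  have e2T : ∫ _ω in T, (1:ℝ) ^ 2 ∂μ = q := by
    simp [Measure.restrict_apply_univ]; rfl
  have e3T : ∫ ω in T, (-X ω) ^ 2 ∂μ = b2 := by
    have : (fun ω => (-X ω) ^ 2) = fun ω => X ω ^ 2 := by funext ω; ring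
    rw [this]
  rw [e1T, e2T, e3T] at hCS4
  have hc4 : c ^ 2 ≤ q * b2 := hCS4
  -- nonnegativity
  have hc0 : 0 ≤ c := setIntegral_nonneg hSm fun ω h => le_of_lt h
  have ha2n : 0 ≤ a2 := setIntegral_nonneg hSm fun ω _ => sq_nonneg _
  have hb2n : 0 ≤ b2 := setIntegral_nonneg hTm fun ω _ => sq_nonneg _
  have ha3n : 0 ≤ a3 := setIntegral_nonneg hSm fun ω _ => by positivity
  have hb3n : 0 ≤ b3 := setIntegral_nonneg hTm fun ω _ => by positivity
  have hpn : 0 ≤ p := ENNReal.toReal_nonneg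
  have hqn : 0 ≤ q := ENNReal.toReal_nonneg
  have hpq : p + q ≤ 1 := by
    have hA : μ S + μ T = μ (S ∪ T) := (measure_union hdisj hTm).symm
    have hB : μ (S ∪ T) ≤ 1 := prob_le_one
    have hC : p + q = (μ (S ∪ T)).toReal := by
      rw [← hA, ENNReal.toReal_add (measure_ne_top μ S) (measure_ne_top μ T)]
    rw [hC]
    calc (μ (S ∪ T)).toReal ≤ (1 : ENNReal).toReal :=
          ENNReal.toReal_mono ENNReal.one_ne_top hB
      _ = 1 := by simp
  -- conclude
  have side1 := side b _ u c p q a2 b2 a3 b3 hu hb2u hbru hbr hc0 hpn hqn hpq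
    ha2n hb2n ha3n hb3n hsum2 hsum3 hc1 hc2' hc3 hc4
  have side2 := side b _ u c q p b2 a2 b3 a3 hu hb2u hbru hbr hc0 hqn hpn
    (by linarith) hb2n ha2n hb3n ha3n (by linarith) (by linarith) hc2' hc1 hc4 hc3
  rw [hEX3, abs_le]
  constructor
  · linarith [side2]
  · exact side1
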